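/- Let D and Θ be nonempty finite sets and f, ucb, lcb : D × Θ → ℝ with lcb(x,θ) ≤ f(x,θ) ≤ ucb(x,θ) for all (x,θ). Suppose x_t maximizes x ↦ min_θ ucb(x,θ) and θ_t minimizes θ ↦ lcb(x_t, θ). Then max_{x ∈ D} min_{θ ∈ Θ} f(x,θ) − min_{θ ∈ Θ} f(x_t, θ) ≤ ucb(x_t,θ_t) − lcb(x_t,θ_t). -/
import Mathlib

open Finset

/-- Per-round regret bound for the robustness-to-unknown-parameters variant of StableOpt. -/
theorem unknown_parameter_stableopt_regret
    {D Θ : Type*} [Fintype D] [Nonempty D] [Fintype Θ] [Nonempty Θ]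
    (f ucb lcb : D → Θ → ℝ)
    (hconf : ∀ x θ, lcb x θ ≤ f x θ ∧ f x θ ≤ ucb x θ)
    (xt : D) (θt : Θ)
    (hxt : ∀ x : D,
      Finset.univ.inf' Finset.univ_nonempty (ucb x)
        ≤ Finset.univ.inf' Finset.univ_nonempty (ucb xt))
    (hθt : ∀ θ : Θ, lcb xt θt ≤ lcb xt θ) :
    Finset.univ.sup' Finset.univ_nonempty
        (fun x : D => Finset.univ.inf' Finset.univ_nonempty (f x))
      - Finset.univ.inf' Finset.univ_nonempty (f xt)
      ≤ ucb xt θt - lcb xt θt := by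
  have h1 : Finset.univ.sup' Finset.univ_nonempty
      (fun x : D => Finset.univ.inf' Finset.univ_nonempty (f x)) ≤ ucb xt θt := by
    apply Finset.sup'_le
    intro x _
    calc Finset.univ.inf' Finset.univ_nonempty (f x)
        ≤ Finset.univ.inf' Finset.univ_nonempty (ucb x) :=
          Finset.le_inf' _ _ (fun θ _ => Finset.inf'_le_of_le _ (Finset.mem_univ θ) (hconf x θ).2)
      _ ≤ Finset.univ.inf' Finset.univ_nonempty (ucb xt) := hxt x
      _ ≤ ucb xt θt := Finset.inf'_le _ (Finset.mem_univ θt)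
  have h2 : lcb xt θt ≤ Finset.univ.inf' Finset.univ_nonempty (f xt) := by
    apply Finset.le_inf'
    intro θ _
    exact (hθt θ).trans (hconf xt θ).1
  linarith
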